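/- Let (y_n)_{n≥0} and (v_n)_{n≥0} be sequences of positive reals related by y_n = (Kn+1)·v_n − Σ_{n1+n2=n, n1,n2≥0} v_{n1}·v_{n2}, where K ≥ 3 is a fixed integer. Suppose y_n ~ c·(Kn+1)!/(K^n·n!) as n → ∞ for some constant c > 0, and suppose v_n/v_{n-1} → ∞. Then v_n ~ y_n/(Kn−1) as n → ∞. -/

import Mathlib

open Nat Finset Filter Asymptotics

set_option maxHeartbeats 1000000

namespace RGQR

lemma fact_add_prod (t s : ℕ) : (t + s)! = t ! * ∏ u ∈ Finset.range s, (t + 1 + u) := by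
  induction s with
  | zero => simp
  | succ s ih =>
    rw [Finset.prod_range_succ, ← mul_assoc, ← ih, ← Nat.add_assoc, Nat.factorial_succ]
    ring

noncomputable def aa (K n : ℕ) : ℝ := ((K * n + 1)! : ℝ) / ((K : ℝ) ^ n * (n ! : ℝ))

noncomputable def rr (K m : ℕ) : ℝ :=
  ∏ u ∈ (Finset.range K).erase (K - 2), ((K * m + 2 + u : ℕ) : ℝ)

lemma aa_pos {K : ℕ} (hK : 3 ≤ K) (n : ℕ) : 0 < aa K n := by
  have h1 : (0:ℝ) < ((K * n + 1)! : ℝ) := by exact_mod_cast Nat.factorial_pos _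
  have h2 : (0:ℝ) < (K:ℝ) := by exact_mod_cast (show 0 < K by omega)
  have h3 : (0:ℝ) < ((n)! : ℝ) := by exact_mod_cast Nat.factorial_pos n
  exact div_pos h1 (by positivity)

lemma rr_pos (K m : ℕ) : 0 < rr K m := by
  apply Finset.prod_pos
  intro u _
  exact_mod_cast (show 0 < K * m + 2 + u by omega)

lemma ksub2_mem {K : ℕ} (hK : 3 ≤ K) : K - 2 ∈ Finset.range K := Finset.mem_range.mpr (by omega)

lemma rr_card {K : ℕ} (hK : 3 ≤ K) : ((Finset.range K).erase (K-2)).card = K - 1 := by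
  rw [Finset.card_erase_of_mem (ksub2_mem hK), Finset.card_range]

lemma my_pow_card_le_prod (s : Finset ℕ) (f : ℕ → ℝ) (n : ℝ) (hn : 0 ≤ n)
    (h : ∀ x ∈ s, n ≤ f x) : n ^ s.card ≤ ∏ x ∈ s, f x := by
  rw [← Finset.prod_const]
  exact Finset.prod_le_prod (fun i _ => hn) h

lemma my_prod_le_pow_card (s : Finset ℕ) (f : ℕ → ℝ) (n : ℝ) (hf : ∀ x ∈ s, 0 ≤ f x)
    (h : ∀ x ∈ s, f x ≤ n) : ∏ x ∈ s, f x ≤ n ^ s.card := by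
  rw [← Finset.prod_const]
  exact Finset.prod_le_prod hf h

lemma aa_succ {K : ℕ} (hK : 3 ≤ K) (m : ℕ) : aa K (m + 1) = aa K m * rr K m := by
  have hmem := ksub2_mem (K := K) hK
  have h3 : (∏ u ∈ Finset.range K, (K*m+1+1+u)) = ∏ u ∈ Finset.range K, (K*m+2+u) :=
    Finset.prod_congr rfl fun u _ => by ring
  have hfact : (K * (m+1) + 1)! = (K*m+1)! * ∏ u ∈ Finset.range K, (K*m+2+u) := by
    have h1 : K * (m+1) + 1 = (K*m+1) + K := by ring
    rw [h1, fact_add_prod, h3]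
  have hval : K*m+2+(K-2) = K*(m+1) := by
    have h2 : 2 + (K - 2) = K := by omega
    calc K*m+2+(K-2) = K*m + (2 + (K-2)) := by ring
    _ = K*m + K := by rw [h2]
    _ = K*(m+1) := by ring
  have hsplit : (∏ u ∈ Finset.range K, (K*m+2+u))
      = (K*(m+1)) * ∏ u ∈ (Finset.range K).erase (K-2), (K*m+2+u) := by
    rw [← Finset.mul_prod_erase _ _ hmem, hval]
  have hrr : rr K m = ((∏ u ∈ (Finset.range K).erase (K-2), (K*m+2+u) : ℕ) : ℝ) := by
    unfold rr; rw [Nat.cast_prod]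
  have hK0 : (K:ℝ) ≠ 0 := by exact_mod_cast (show K ≠ 0 by omega)
  have hf1 : ((m)! : ℝ) ≠ 0 := by exact_mod_cast (Nat.factorial_pos m).ne'
  have hm1 : ((m:ℝ) + 1) ≠ 0 := by positivity
  unfold aa
  rw [hrr, hfact, hsplit, pow_succ, Nat.factorial_succ m]
  push_cast
  field_simp

lemma rr_mono {K : ℕ} {m m' : ℕ} (h : m ≤ m') : rr K m ≤ rr K m' := by
  unfold rr
  apply Finset.prod_le_prod
  · intro u _; exact_mod_cast Nat.zero_le _
  · intro u _
    have hh : K*m+2+u ≤ K*m'+2+u := by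
      have := Nat.mul_le_mul_left K h
      omega
    exact_mod_cast hh

lemma rr_ge_sq {K : ℕ} (hK : 3 ≤ K) (m : ℕ) : 4*((m:ℝ)+1)^2 ≤ rr K m := by
  have hbase : ∀ u ∈ (Finset.range K).erase (K-2), ((2*m+2 : ℕ) : ℝ) ≤ ((K*m+2+u : ℕ) : ℝ) := by
    intro u _
    have : 2*m+2 ≤ K*m+2+u := by
      have := Nat.mul_le_mul_right m (show 2 ≤ K by omega)
      omega
    exact_mod_cast this
  have h1 : ((2*m+2 : ℕ) : ℝ) ^ ((Finset.range K).erase (K-2)).card ≤ rr K m :=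
    my_pow_card_le_prod _ _ _ (by positivity) hbase
  rw [rr_card hK] at h1
  have hb1 : (1:ℝ) ≤ ((2*m+2 : ℕ) : ℝ) := by exact_mod_cast (show 1 ≤ 2*m+2 by omega)
  have h2 : ((2*m+2 : ℕ) : ℝ)^2 ≤ ((2*m+2 : ℕ) : ℝ) ^ (K-1) :=
    pow_le_pow_right₀ hb1 (by omega)
  have h3 : 4*((m:ℝ)+1)^2 = ((2*m+2 : ℕ) : ℝ)^2 := by push_cast; ring
  linarith

lemma rr_quad {K : ℕ} (hK : 3 ≤ K) {i j : ℕ} (h : 4*i+5 ≤ j) : 16 * rr K i ≤ rr K j := by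
  have hup : rr K i ≤ ((K*i+K+1 : ℕ) : ℝ) ^ (K-1) := by
    have h1 : rr K i ≤ ((K*i+K+1 : ℕ) : ℝ) ^ ((Finset.range K).erase (K-2)).card := by
      apply my_prod_le_pow_card
      · intro u _; exact_mod_cast Nat.zero_le _
      · intro u hu
        have hu' : u < K := Finset.mem_range.mp (Finset.mem_of_mem_erase hu)
        exact_mod_cast (show K*i+2+u ≤ K*i+K+1 by omega)
    rwa [rr_card hK] at h1
  have hlo : ((K*j+2 : ℕ) : ℝ) ^ (K-1) ≤ rr K j := by
    have h1 : ((K*j+2 : ℕ) : ℝ) ^ ((Finset.range K).erase (K-2)).card ≤ rr K j := by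
      apply my_pow_card_le_prod
      · positivity
      · intro u _
        exact_mod_cast (show K*j+2 ≤ K*j+2+u by omega)
    rwa [rr_card hK] at h1
  have hmul : 4 * ((K*i+K+1 : ℕ) : ℝ) ≤ ((K*j+2 : ℕ) : ℝ) := by
    have hj := Nat.mul_le_mul_left K h
    have : 4*(K*i+K+1) ≤ K*j+2 := by
      -- K*(4i+5) ≤ K*j
      have h2 : K*(4*i+5) ≤ K*j := hj
      nlinarith [hK]
    exact_mod_cast this
  have hcnt : (16:ℝ) * ((K*i+K+1 : ℕ) : ℝ)^(K-1) ≤ ((K*j+2 : ℕ) : ℝ)^(K-1) := by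
    have hx0 : (0:ℝ) ≤ ((K*i+K+1 : ℕ) : ℝ) := by positivity
    have h4 : (4 * ((K*i+K+1 : ℕ) : ℝ))^(K-1) ≤ ((K*j+2 : ℕ) : ℝ)^(K-1) :=
      pow_le_pow_left₀ (by positivity) hmul _
    have h5 : (4:ℝ)^(K-1) * ((K*i+K+1 : ℕ) : ℝ)^(K-1) = (4 * ((K*i+K+1 : ℕ) : ℝ))^(K-1) :=
      (mul_pow _ _ _).symm
    have h6 : (16:ℝ) ≤ (4:ℝ)^(K-1) := by
      calc (16:ℝ) = 4^2 := by norm_num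
      _ ≤ 4^(K-1) := pow_le_pow_right₀ (by norm_num) (by omega)
    have h7 : ((K*i+K+1 : ℕ) : ℝ)^(K-1) ≥ 0 := by positivity
    nlinarith
  have := rr_pos K i
  linarith [hcnt, hup, hlo, mul_le_mul_of_nonneg_left hup (show (0:ℝ) ≤ 16 by norm_num)]

lemma QM {K : ℕ} (hK : 3 ≤ K) {i j : ℕ} (h : i ≤ j) :
    aa K (i+1) * aa K j ≤ aa K i * aa K (j+1) := by
  rw [aa_succ hK i, aa_succ hK j]
  have h1 := aa_pos hK i
  have h2 := aa_pos hK j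
  have h3 := rr_pos K i
  have h4 := rr_pos K j
  have h5 := rr_mono (K := K) h
  nlinarith [mul_le_mul_of_nonneg_left h5 (mul_pos h1 h2).le]

lemma QD {K : ℕ} (hK : 3 ≤ K) {i j : ℕ} (h : 4*i+5 ≤ j) :
    16 * (aa K (i+1) * aa K j) ≤ aa K i * aa K (j+1) := by
  rw [aa_succ hK i, aa_succ hK j]
  have h1 := aa_pos hK i
  have h2 := aa_pos hK j
  have h3 := rr_pos K i
  have h4 := rr_pos K j
  have h5 := rr_quad hK h
  nlinarith [mul_le_mul_of_nonneg_left h5 (mul_pos h1 h2).le]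

lemma chainM {K : ℕ} (hK : 3 ≤ K) :
    ∀ i p j : ℕ, 1 ≤ p → p ≤ i → i ≤ j → aa K i * aa K j ≤ aa K p * aa K (i + j - p) := by
  intro i
  induction i using Nat.strong_induction_on with
  | _ i IH =>
    intro p j hp hpi hij
    rcases eq_or_lt_of_le hpi with rfl | hlt
    · have h : p + j - p = j := by omega
      rw [h]
    · obtain ⟨i', rfl⟩ : ∃ i', i = i' + 1 := ⟨i - 1, by omega⟩
      have h1 : aa K (i'+1) * aa K j ≤ aa K i' * aa K (j+1) := QM hK (by omega)
      have h2 : aa K i' * aa K (j+1) ≤ aa K p * aa K (i' + (j+1) - p) :=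
        IH i' (by omega) p (j+1) hp (by omega) (by omega)
      have h3 : i' + (j+1) - p = (i'+1) + j - p := by omega
      rw [h3] at h2
      linarith

lemma chainD {K : ℕ} (hK : 3 ≤ K) :
    ∀ i j : ℕ, 1 ≤ i → 4*i+1 ≤ j →
      (16:ℝ)^(i-1) * (aa K i * aa K j) ≤ aa K 1 * aa K (i + j - 1) := by
  intro i
  induction i using Nat.strong_induction_on with
  | _ i IH =>
    intro j hi hj
    rcases eq_or_lt_of_le hi with h1 | h1
    · -- 1 = i
      rw [← h1]
      simp
    · obtain ⟨i', rfl⟩ : ∃ i', i = i' + 1 := ⟨i - 1, by omega⟩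
      have hQD : 16 * (aa K (i'+1) * aa K j) ≤ aa K i' * aa K (j+1) := QD hK (by omega)
      have hIH := IH i' (by omega) (j+1) (by omega) (by omega)
      have harith : i' + (j+1) - 1 = (i'+1) + j - 1 := by omega
      rw [harith] at hIH
      have hpow : (16:ℝ)^((i'+1)-1) = (16:ℝ)^(i'-1) * 16 := by
        have h2 : (i'+1)-1 = (i'-1)+1 := by omega
        rw [h2, pow_succ]
      rw [hpow]
      have hp16 : (0:ℝ) ≤ (16:ℝ)^(i'-1) := by positivity
      nlinarith [hQD, hIH, hp16]

lemma conv2_aux {K : ℕ} (hK : 3 ≤ K) {i j : ℕ} (hi : 1 ≤ i) (hij : i ≤ j) :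
    (2:ℝ)^i * (aa K i * aa K j) ≤ 2^50 * (aa K 1 * aa K (i + j - 1)) := by
  have hQpos : 0 < aa K i * aa K j := mul_pos (aa_pos hK i) (aa_pos hK j)
  have hRpos : 0 < aa K 1 * aa K (i + j - 1) := mul_pos (aa_pos hK 1) (aa_pos hK _)
  by_cases hcase : 4*i+1 ≤ j
  · have h := chainD hK i j hi hcase
    have hp : (2:ℝ)^i ≤ 2^4 * 16^(i-1) := by
      have h16 : (16:ℝ)^(i-1) = 2^(4*(i-1)) := by
        rw [show (16:ℝ) = 2^4 by norm_num, ← pow_mul]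
      rw [h16, ← pow_add]
      exact pow_le_pow_right₀ (by norm_num) (by omega)
    have h2 : (2:ℝ)^i * (aa K i * aa K j) ≤ 2^4 * (16^(i-1) * (aa K i * aa K j)) := by
      nlinarith [hQpos, hp]
    have h3 : (2:ℝ)^4 * (16^(i-1) * (aa K i * aa K j)) ≤ 2^4 * (aa K 1 * aa K (i+j-1)) := by
      nlinarith [h]
    have h4 : (2:ℝ)^4 * (aa K 1 * aa K (i+j-1)) ≤ 2^50 * (aa K 1 * aa K (i+j-1)) := by
      nlinarith [hRpos]
    linarith
  · push_neg at hcase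
    by_cases hsmall : i ≤ 46
    · have hQR := chainM hK i 1 j le_rfl hi hij
      have hp : (2:ℝ)^i ≤ 2^50 := pow_le_pow_right₀ (by norm_num) (by omega)
      nlinarith [hQpos, hRpos, hQR, hp, pow_pos (show (0:ℝ) < 2 by norm_num) i]
    · push_neg at hsmall
      set p := (i+j)/8 with hp
      have hij94 : 94 ≤ i + j := by omega
      have hp1 : 1 ≤ p := by omega
      have hpi : p ≤ i := by omega
      have h1 : aa K i * aa K j ≤ aa K p * aa K (i+j-p) := chainM hK i p j hp1 hpi hij
      have hD : (16:ℝ)^(p-1) * (aa K p * aa K (i+j-p)) ≤ aa K 1 * aa K (p + (i+j-p) - 1) :=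
        chainD hK p (i+j-p) hp1 (by omega)
      have h3 : p + (i+j-p) - 1 = i+j-1 := by omega
      rw [h3] at hD
      have hi4 : i ≤ 4*p+3 := by omega
      have hp2 : (2:ℝ)^i ≤ 2^50 * 16^(p-1) := by
        rw [show (16:ℝ) = 2^4 by norm_num, ← pow_mul, ← pow_add]
        exact pow_le_pow_right₀ (by norm_num) (by omega)
      have hQp : 0 < aa K p * aa K (i+j-p) := mul_pos (aa_pos hK p) (aa_pos hK _)
      have h16p : (0:ℝ) < 16^(p-1) := by positivity
      nlinarith [h1, hD, hp2, hQpos, hQp, h16p, hRpos]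

lemma conv2 {K : ℕ} (hK : 3 ≤ K) {i j : ℕ} (hi : 1 ≤ i) (hj : 1 ≤ j) :
    (2:ℝ)^(min i j) * (aa K i * aa K j) ≤ 2^50 * (aa K 1 * aa K (i + j - 1)) := by
  rcases le_total i j with h | h
  · rw [min_eq_left h]; exact conv2_aux hK hi h
  · rw [min_eq_right h]
    have h1 := conv2_aux hK hj h
    have h2 : j + i - 1 = i + j - 1 := by omega
    rw [h2] at h1
    nlinarith [h1]

lemma aa_ratio {K : ℕ} (hK : 3 ≤ K) (m : ℕ) :
    4*((m:ℝ)+1)^2 * aa K m ≤ aa K (m+1) := by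
  rw [aa_succ hK m]
  have h1 := rr_ge_sq hK m
  have h2 := aa_pos hK m
  nlinarith

section Abstract

variable {t : ℕ → ℝ}

noncomputable def PP (t : ℕ → ℝ) (z : ℝ) (N : ℕ) : ℝ := ∑ i ∈ Finset.Ico 1 (N+1), t i * z ^ i

lemma PP_nonneg (ht : ∀ n, 0 ≤ t n) {z : ℝ} (hz : 0 ≤ z) (N : ℕ) : 0 ≤ PP t z N :=
  Finset.sum_nonneg fun i _ => mul_nonneg (ht i) (pow_nonneg hz i)

lemma PP_mono_N (ht : ∀ n, 0 ≤ t n) {z : ℝ} (hz : 0 ≤ z) {N N' : ℕ} (h : N ≤ N') :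
    PP t z N ≤ PP t z N' := by
  apply Finset.sum_le_sum_of_subset_of_nonneg
  · exact Finset.Ico_subset_Ico le_rfl (by omega)
  · intro i _ _; exact mul_nonneg (ht i) (pow_nonneg hz i)

lemma PP_mono_z (ht : ∀ n, 0 ≤ t n) {z z' : ℝ} (hz : 0 ≤ z) (h : z ≤ z') (N : ℕ) :
    PP t z N ≤ PP t z' N := by
  apply Finset.sum_le_sum
  intro i _
  exact mul_le_mul_of_nonneg_left (pow_le_pow_left₀ hz h i) (ht i)

lemma le_PP (ht : ∀ n, 0 ≤ t n) {z : ℝ} (hz : 0 ≤ z) {i N : ℕ} (h1 : 1 ≤ i) (h2 : i ≤ N) :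
    t i * z ^ i ≤ PP t z N := by
  apply Finset.single_le_sum (f := fun i => t i * z ^ i)
  · intro j _; exact mul_nonneg (ht j) (pow_nonneg hz j)
  · exact Finset.mem_Ico.mpr ⟨h1, by omega⟩

lemma sum_reflect (M : ℕ) (f : ℕ → ℝ) :
    ∑ i ∈ Finset.Ico 1 M, f i = ∑ i ∈ Finset.Ico 1 M, f (M - i) := by
  apply Finset.sum_nbij' (fun i => M - i) (fun i => M - i)
  · intro a ha
    have := Finset.mem_Ico.mp ha
    exact Finset.mem_Ico.mpr (by omega)
  · intro a ha
    have := Finset.mem_Ico.mp ha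
    exact Finset.mem_Ico.mpr (by omega)
  · intro a ha
    have := Finset.mem_Ico.mp ha
    omega
  · intro a ha
    have := Finset.mem_Ico.mp ha
    omega
  · intro a ha
    have := Finset.mem_Ico.mp ha
    congr 1
    omega

lemma split_core (ht : ∀ n, 0 ≤ t n) (M : ℕ) :
    ∑ i ∈ Finset.Ico 1 M, t i * t (M-i) * (1/2:ℝ)^(min i (M-i))
      ≤ 2 * ∑ i ∈ Finset.Ico 1 M, t i * (1/2:ℝ)^i * t (M-i) := by
  have h1 : ∑ i ∈ Finset.Ico 1 M, t i * t (M-i) * (1/2:ℝ)^(min i (M-i))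
      ≤ (∑ i ∈ Finset.Ico 1 M, t i * (1/2:ℝ)^i * t (M-i))
        + ∑ i ∈ Finset.Ico 1 M, t i * t (M-i) * (1/2:ℝ)^(M-i) := by
    rw [← Finset.sum_add_distrib]
    apply Finset.sum_le_sum
    intro i _
    have hmin : (1/2:ℝ)^(min i (M-i)) ≤ (1/2:ℝ)^i + (1/2:ℝ)^(M-i) := by
      rcases min_choice i (M-i) with h | h <;> rw [h]
      · have : (0:ℝ) ≤ (1/2:ℝ)^(M-i) := by positivity
        linarith
      · have : (0:ℝ) ≤ (1/2:ℝ)^i := by positivity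
        linarith
    have h0 : 0 ≤ t i * t (M-i) := mul_nonneg (ht i) (ht (M-i))
    nlinarith [mul_le_mul_of_nonneg_left hmin h0]
  have h2 : ∑ i ∈ Finset.Ico 1 M, t i * t (M-i) * (1/2:ℝ)^(M-i)
      = ∑ i ∈ Finset.Ico 1 M, t i * (1/2:ℝ)^i * t (M-i) := by
    rw [sum_reflect M (fun i => t i * t (M-i) * (1/2:ℝ)^(M-i))]
    apply Finset.sum_congr rfl
    intro i hi
    have hmem := Finset.mem_Ico.mp hi
    have hMi : M - (M - i) = i := by omega
    rw [hMi]
    ring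
  linarith

lemma split_z (ht : ∀ n, 0 ≤ t n) (M : ℕ) (hM : 1 ≤ M) {z : ℝ} (hz : 0 ≤ z) :
    (∑ i ∈ Finset.Ico 1 M, t i * t (M-i) * (1/2:ℝ)^(min i (M-i))) * z^M
      ≤ 2 * (PP t (z/2) (M-1) * PP t z (M-1)) := by
  have h0 := split_core ht M
  have hzM : 0 ≤ z^M := pow_nonneg hz M
  have step1 : (∑ i ∈ Finset.Ico 1 M, t i * t (M-i) * (1/2:ℝ)^(min i (M-i))) * z^M
      ≤ (2 * ∑ i ∈ Finset.Ico 1 M, t i * (1/2:ℝ)^i * t (M-i)) * z^M :=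
    mul_le_mul_of_nonneg_right h0 hzM
  have hrw : (∑ i ∈ Finset.Ico 1 M, t i * (1/2:ℝ)^i * t (M-i)) * z^M
      = ∑ i ∈ Finset.Ico 1 M, (t i * (z/2)^i) * (t (M-i) * z^(M-i)) := by
    rw [Finset.sum_mul]
    apply Finset.sum_congr rfl
    intro i hi
    have hmem := Finset.mem_Ico.mp hi
    have hpow : z^M = z^i * z^(M-i) := by
      rw [← pow_add]
      congr 1
      omega
    have hhalf : (z/2)^i = z^i * (1/2:ℝ)^i := by
      rw [show z/2 = z * (1/2:ℝ) by ring, mul_pow]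
    rw [hpow, hhalf]
    ring
  have hIco : Finset.Ico 1 M = Finset.Ico 1 ((M-1)+1) := by congr 1; omega
  have hbnd : ∑ i ∈ Finset.Ico 1 M, (t i * (z/2)^i) * (t (M-i) * z^(M-i))
      ≤ PP t (z/2) (M-1) * PP t z (M-1) := by
    have hstep : ∀ i ∈ Finset.Ico 1 M, (t i * (z/2)^i) * (t (M-i) * z^(M-i))
        ≤ (t i * (z/2)^i) * PP t z (M-1) := by
      intro i hi
      have hmem := Finset.mem_Ico.mp hi
      have hle : t (M-i) * z^(M-i) ≤ PP t z (M-1) := le_PP ht hz (by omega) (by omega)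
      exact mul_le_mul_of_nonneg_left hle (mul_nonneg (ht i) (pow_nonneg (by positivity) i))
    calc ∑ i ∈ Finset.Ico 1 M, (t i * (z/2)^i) * (t (M-i) * z^(M-i))
        ≤ ∑ i ∈ Finset.Ico 1 M, (t i * (z/2)^i) * PP t z (M-1) := Finset.sum_le_sum hstep
      _ = (∑ i ∈ Finset.Ico 1 M, t i * (z/2)^i) * PP t z (M-1) := by rw [← Finset.sum_mul]
      _ = PP t (z/2) (M-1) * PP t z (M-1) := by
          congr 1
  calc (∑ i ∈ Finset.Ico 1 M, t i * t (M-i) * (1/2:ℝ)^(min i (M-i))) * z^M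
      ≤ (2 * ∑ i ∈ Finset.Ico 1 M, t i * (1/2:ℝ)^i * t (M-i)) * z^M := step1
    _ = 2 * ((∑ i ∈ Finset.Ico 1 M, t i * (1/2:ℝ)^i * t (M-i)) * z^M) := by ring
    _ = 2 * (∑ i ∈ Finset.Ico 1 M, (t i * (z/2)^i) * (t (M-i) * z^(M-i))) := by rw [hrw]
    _ ≤ 2 * (PP t (z/2) (M-1) * PP t z (M-1)) := by linarith [hbnd]

lemma sum_sq_inv_aux (a : ℕ) (ha : 1 ≤ a) :
    ∀ N, a ≤ N → ∑ M ∈ Finset.Ico (a+1) (N+1), (1:ℝ)/(M:ℝ)^2 ≤ 1/a - 1/N := by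
  intro N
  induction N with
  | zero => intro h; omega
  | succ N ih =>
    intro hN
    rcases Nat.eq_or_lt_of_le hN with h | h
    · rw [← h]
      simp
    · have hN' : a ≤ N := by omega
      have h1 := ih hN'
      rw [Finset.sum_Ico_succ_top (by omega : a+1 ≤ N+1)]
      have hN0 : (0:ℝ) < (N:ℝ) := by exact_mod_cast (show 0 < N by omega)
      have hN10 : (0:ℝ) < (N:ℝ)+1 := by linarith
      have key : (1:ℝ)/((N:ℝ)+1)^2 ≤ 1/(N:ℝ) - 1/((N:ℝ)+1) := by
        have hd : (1:ℝ)/(N:ℝ) - 1/((N:ℝ)+1) = 1/((N:ℝ)*((N:ℝ)+1)) := by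
          field_simp
          ring
        rw [hd]
        apply div_le_div_of_nonneg_left (by norm_num) (by positivity)
        nlinarith
      have hcast : ((N+1 : ℕ):ℝ) = (N:ℝ)+1 := by push_cast; ring
      rw [hcast]
      linarith

lemma sum_sq_inv (a : ℕ) (ha : 1 ≤ a) (b : ℕ) :
    ∑ M ∈ Finset.Ico (a+1) b, (1:ℝ)/(M:ℝ)^2 ≤ 1/a := by
  have ha0 : (0:ℝ) < (a:ℝ) := by exact_mod_cast (show 0 < a by omega)
  rcases b with _ | N
  · simp [Finset.Ico_eq_empty_of_le]
  · rcases le_or_gt a N with h | h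
    · have h1 := sum_sq_inv_aux a ha N h
      have hN0 : (0:ℝ) < (N:ℝ) := by exact_mod_cast (show 0 < N by omega)
      have : (0:ℝ) ≤ 1/(N:ℝ) := by positivity
      linarith
    · rw [Finset.Ico_eq_empty (by omega)]
      simp

lemma geo_half_eq : ∀ N : ℕ, ∑ M ∈ Finset.Ico 1 (N+1), (1/2:ℝ)^M = 1 - (1/2:ℝ)^N := by
  intro N
  induction N with
  | zero => simp
  | succ N ih =>
    rw [Finset.sum_Ico_succ_top (by omega : 1 ≤ N+1), ih, pow_succ]
    ring

lemma geo_sum_le {z : ℝ} (h0 : 0 ≤ z) (h2 : z ≤ 1/2) (a b : ℕ) (ha : 1 ≤ a) :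
    ∑ M ∈ Finset.Ico a b, z^M ≤ 1 := by
  have s1 : ∑ M ∈ Finset.Ico a b, z^M ≤ ∑ M ∈ Finset.Ico 1 b, z^M := by
    apply Finset.sum_le_sum_of_subset_of_nonneg
    · exact Finset.Ico_subset_Ico ha le_rfl
    · intro i _ _; positivity
  have s2 : ∑ M ∈ Finset.Ico 1 b, z^M ≤ ∑ M ∈ Finset.Ico 1 b, (1/2:ℝ)^M := by
    apply Finset.sum_le_sum
    intro i _
    exact pow_le_pow_left₀ h0 h2 i
  have s3 : ∑ M ∈ Finset.Ico 1 b, (1/2:ℝ)^M ≤ 1 := by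
    rcases b with _ | N
    · simp
    · rw [geo_half_eq N]
      have : (0:ℝ) ≤ (1/2:ℝ)^N := by positivity
      linarith
  linarith

lemma geo_range_le : ∀ n : ℕ, ∑ j ∈ Finset.range n, (1/2:ℝ)^j ≤ 2 := by
  intro n
  induction n with
  | zero => simp
  | succ n ih =>
    have heq : ∀ m : ℕ, ∑ j ∈ Finset.range m, (1/2:ℝ)^j = 2 - 2*(1/2:ℝ)^m := by
      intro m
      induction m with
      | zero => simp
      | succ m ihm => rw [Finset.sum_range_succ, ihm, pow_succ]; ring
    rw [heq]
    have : (0:ℝ) ≤ (1/2:ℝ)^(n+1) := by positivity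
    linarith

lemma geo_x2 {x : ℝ} (h0 : 0 ≤ x) (h2 : x ≤ 1/2) (N : ℕ) :
    ∑ M ∈ Finset.Ico 2 N, x^M ≤ 2*x^2 := by
  have s1 : ∑ M ∈ Finset.Ico 2 N, x^M ≤ ∑ M ∈ Finset.Ico 2 N, x^2 * (1/2:ℝ)^(M-2) := by
    apply Finset.sum_le_sum
    intro i hi
    have hmem := Finset.mem_Ico.mp hi
    have hpow : x^i = x^2 * x^(i-2) := by
      rw [← pow_add]
      congr 1
      omega
    rw [hpow]
    apply mul_le_mul_of_nonneg_left _ (by positivity)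
    exact pow_le_pow_left₀ h0 h2 _
  have s2 : ∑ M ∈ Finset.Ico 2 N, x^2 * (1/2:ℝ)^(M-2) = x^2 * ∑ j ∈ Finset.range (N-2), (1/2:ℝ)^j := by
    rw [Finset.mul_sum, Finset.sum_Ico_eq_sum_range]
    apply Finset.sum_congr rfl
    intro j _
    have hj : 2 + j - 2 = j := by omega
    rw [hj]
  have s3 := geo_range_le (N-2)
  have hx2 : (0:ℝ) ≤ x^2 := by positivity
  calc ∑ M ∈ Finset.Ico 2 N, x^M ≤ x^2 * ∑ j ∈ Finset.range (N-2), (1/2:ℝ)^j := by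
        rw [← s2]; exact s1
    _ ≤ x^2 * 2 := mul_le_mul_of_nonneg_left s3 hx2
    _ = 2*x^2 := by ring

end Abstract

section Bounded

variable {t : ℕ → ℝ} {Cy κ : ℝ}

lemma stage0 (ht : ∀ n, 0 ≤ t n) (hCy : 0 < Cy) (hκ : 1 ≤ κ)
    (hstep : ∀ M, 1 ≤ M → t M ≤ Cy + κ / (M:ℝ)^2 *
      ∑ i ∈ Finset.Ico 1 M, t i * t (M-i) * (1/2:ℝ)^(min i (M-i))) :
    ∃ x B : ℝ, 0 < x ∧ x ≤ 1/4 ∧ 0 < B ∧ ∀ N, PP t x N ≤ B := by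
  have hκ0 : (0:ℝ) < κ := by linarith
  have ht1 := ht 1
  obtain ⟨x, hxdef⟩ : ∃ x : ℝ, x = min (1/4 : ℝ) (1/(8*κ*(t 1 + Cy + 1))) := ⟨_, rfl⟩
  have hx0 : 0 < x := by rw [hxdef]; exact lt_min (by norm_num) (by positivity)
  have hx4 : x ≤ 1/4 := by rw [hxdef]; exact min_le_left _ _
  have hxr : x ≤ 1/(8*κ*(t 1 + Cy + 1)) := by rw [hxdef]; exact min_le_right _ _
  obtain ⟨B, hBdef⟩ : ∃ B : ℝ, B = 2*(t 1 + Cy)*x := ⟨_, rfl⟩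
  have hB0 : 0 < B := by
    rw [hBdef]
    apply mul_pos _ hx0
    nlinarith
  refine ⟨x, B, hx0, hx4, hB0, ?_⟩
  have hBsmall : B ≤ 1/(4*κ) := by
    rw [hBdef]
    have h1 : 0 < 8*κ*(t 1 + Cy + 1) := by positivity
    have h2 : 2*(t 1 + Cy) * x ≤ 2*(t 1 + Cy) * (1/(8*κ*(t 1 + Cy + 1))) := by
      apply mul_le_mul_of_nonneg_left hxr
      nlinarith
    have h3 : 2*(t 1 + Cy) * (1/(8*κ*(t 1 + Cy + 1))) ≤ 1/(4*κ) := by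
      rw [mul_one_div, div_le_div_iff₀ h1 (by positivity)]
      nlinarith
    linarith
  intro N
  induction N using Nat.strong_induction_on with
  | _ N IH =>
  rcases Nat.eq_zero_or_pos N with rfl | hN
  · have : PP t x 0 = 0 := by simp [PP]
    linarith
  have hsplit : PP t x N = t 1 * x^1 + ∑ M ∈ Finset.Ico 2 (N+1), t M * x^M := by
    simp only [PP]
    rw [Finset.sum_eq_sum_Ico_succ_bot (show 1 < N+1 by omega)]
  have hterm : ∀ M ∈ Finset.Ico 2 (N+1), t M * x^M ≤ Cy*x^M + 2*κ*B^2 * (1/(M:ℝ)^2) := by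
    intro M hM
    have hmem := Finset.mem_Ico.mp hM
    have hM1 : 1 ≤ M := by omega
    have h1 := hstep M hM1
    have hxM : 0 ≤ x^M := pow_nonneg hx0.le M
    have hM0 : (0:ℝ) < (M:ℝ)^2 := by
      have : (0:ℝ) < (M:ℝ) := by exact_mod_cast (show 0 < M by omega)
      positivity
    have h3 := split_z ht M hM1 hx0.le
    have h4 : PP t (x/2) (M-1) ≤ PP t x (M-1) := PP_mono_z ht (by positivity) (by linarith) _
    have h5 : PP t x (M-1) ≤ B := IH (M-1) (by omega)
    have hPn1 : 0 ≤ PP t (x/2) (M-1) := PP_nonneg ht (by positivity) _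
    have hPn2 : 0 ≤ PP t x (M-1) := PP_nonneg ht hx0.le _
    have h6 : (∑ i ∈ Finset.Ico 1 M, t i * t (M-i) * (1/2:ℝ)^(min i (M-i))) * x^M
        ≤ 2*B^2 := by
      have : PP t (x/2) (M-1) * PP t x (M-1) ≤ B^2 := by nlinarith
      nlinarith
    have h7 : t M * x^M ≤ Cy*x^M + κ/(M:ℝ)^2 *
        ((∑ i ∈ Finset.Ico 1 M, t i * t (M-i) * (1/2:ℝ)^(min i (M-i))) * x^M) := by
      have := mul_le_mul_of_nonneg_right h1 hxM
      calc t M * x^M ≤ (Cy + κ/(M:ℝ)^2 * ∑ i ∈ Finset.Ico 1 M, t i * t (M-i) * (1/2:ℝ)^(min i (M-i))) * x^M := this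
        _ = Cy*x^M + κ/(M:ℝ)^2 * ((∑ i ∈ Finset.Ico 1 M, t i * t (M-i) * (1/2:ℝ)^(min i (M-i))) * x^M) := by ring
    have h8 : κ/(M:ℝ)^2 * ((∑ i ∈ Finset.Ico 1 M, t i * t (M-i) * (1/2:ℝ)^(min i (M-i))) * x^M)
        ≤ κ/(M:ℝ)^2 * (2*B^2) := by
      apply mul_le_mul_of_nonneg_left h6
      positivity
    have h9 : κ/(M:ℝ)^2 * (2*B^2) = 2*κ*B^2 * (1/(M:ℝ)^2) := by
      field_simp
    linarith
  have hsum1 : ∑ M ∈ Finset.Ico 2 (N+1), t M * x^M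
      ≤ ∑ M ∈ Finset.Ico 2 (N+1), (Cy*x^M + 2*κ*B^2 * (1/(M:ℝ)^2)) := Finset.sum_le_sum hterm
  have hsum2 : ∑ M ∈ Finset.Ico 2 (N+1), (Cy*x^M + 2*κ*B^2 * (1/(M:ℝ)^2))
      = Cy * (∑ M ∈ Finset.Ico 2 (N+1), x^M) + 2*κ*B^2 * ∑ M ∈ Finset.Ico 2 (N+1), (1:ℝ)/(M:ℝ)^2 := by
    rw [Finset.sum_add_distrib, Finset.mul_sum, Finset.mul_sum]
  have hg := geo_x2 hx0.le (by linarith) (N+1)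
  have hsq := sum_sq_inv 1 le_rfl (N+1)
  have hsq' : ∑ M ∈ Finset.Ico 2 (N+1), (1:ℝ)/(M:ℝ)^2 ≤ 1 := by
    have : ((1:ℕ):ℝ) = (1:ℝ) := by norm_num
    simpa using hsq
  have hb1 : Cy * (∑ M ∈ Finset.Ico 2 (N+1), x^M) ≤ Cy * (2*x^2) := by
    apply mul_le_mul_of_nonneg_left hg hCy.le
  have hb2 : 2*κ*B^2 * ∑ M ∈ Finset.Ico 2 (N+1), (1:ℝ)/(M:ℝ)^2 ≤ 2*κ*B^2 := by
    have hS0 : 0 ≤ ∑ M ∈ Finset.Ico 2 (N+1), (1:ℝ)/(M:ℝ)^2 :=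
      Finset.sum_nonneg fun i _ => by positivity
    have hc : 0 ≤ 2*κ*B^2 := by positivity
    nlinarith [hsq', hS0, hc]
  -- collect
  have hx1 : t 1 * x ^ 1 + Cy * (2*x^2) ≤ (t 1 + Cy) * x := by
    have h2x : 2*x^2 ≤ x := by nlinarith [hx0.le, hx4]
    have hc : Cy * (2*x^2) ≤ Cy * x := mul_le_mul_of_nonneg_left h2x hCy.le
    have h1x : t 1 * x^1 = t 1 * x := by ring
    have hex : (t 1 + Cy) * x = t 1 * x + Cy * x := by ring
    linarith
  have hquad : 2*κ*B^2 ≤ B/2 := by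
    have hh : 2*κ*B ≤ 1/2 := by
      have h0 := mul_le_mul_of_nonneg_left hBsmall (show (0:ℝ) ≤ 2*κ by positivity)
      have he : 2*κ*(1/(4*κ)) = 1/2 := by
        field_simp
        ring
      calc 2*κ*B ≤ 2*κ*(1/(4*κ)) := h0
        _ = 1/2 := he
    have h2 := mul_le_mul_of_nonneg_right hh hB0.le
    have h3 : 2*κ*B^2 = 2*κ*B*B := by ring
    rw [h3]
    linarith
  have hBx : (t 1 + Cy) * x = B/2 := by rw [hBdef]; ring
  calc PP t x N = t 1 * x^1 + ∑ M ∈ Finset.Ico 2 (N+1), t M * x^M := hsplit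
    _ ≤ t 1 * x^1 + (Cy * (2*x^2) + 2*κ*B^2) := by linarith
    _ ≤ B/2 + B/2 := by linarith [hx1, hquad, hBx]
    _ = B := by ring

lemma double (ht : ∀ n, 0 ≤ t n) (hCy : 0 < Cy) (hκ : 1 ≤ κ)
    (hstep : ∀ M, 1 ≤ M → t M ≤ Cy + κ / (M:ℝ)^2 *
      ∑ i ∈ Finset.Ico 1 M, t i * t (M-i) * (1/2:ℝ)^(min i (M-i)))
    {x B : ℝ} (hx0 : 0 < x) (hB0 : 0 < B) (hPB : ∀ N, PP t x N ≤ B) :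
    ∃ B', 0 < B' ∧ ∀ N, PP t (min (2*x) (1/2)) N ≤ B' := by
  have hκ0 : (0:ℝ) < κ := by linarith
  obtain ⟨z, hzdef⟩ : ∃ z : ℝ, z = min (2*x) (1/2 : ℝ) := ⟨_, rfl⟩
  have hz0 : 0 < z := by rw [hzdef]; exact lt_min (by linarith) (by norm_num)
  have hz2 : z ≤ 1/2 := by rw [hzdef]; exact min_le_right _ _
  have hzx : z/2 ≤ x := by
    have : z ≤ 2*x := by rw [hzdef]; exact min_le_left _ _
    linarith
  obtain ⟨M₀, hM₀def⟩ : ∃ M : ℕ, M = max 2 (⌈8*κ*B⌉₊) := ⟨_, rfl⟩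
  have hM₀2 : 2 ≤ M₀ := by rw [hM₀def]; exact le_max_left _ _
  have hM₀κ : 8*κ*B ≤ (M₀:ℝ) := by
    have h1 : (8*κ*B) ≤ (⌈8*κ*B⌉₊ : ℝ) := Nat.le_ceil _
    have h2 : (⌈8*κ*B⌉₊ : ℝ) ≤ (M₀:ℝ) := by
      rw [hM₀def]
      exact_mod_cast le_max_right _ _
    linarith
  have hM₀0 : (0:ℝ) < (M₀:ℝ) := by exact_mod_cast (show 0 < M₀ by omega)
  obtain ⟨B', hB'def⟩ : ∃ b : ℝ, b = 4*(PP t z M₀ + Cy) := ⟨_, rfl⟩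
  have hPPz0 : 0 ≤ PP t z M₀ := PP_nonneg ht hz0.le _
  have hB'0 : 0 < B' := by rw [hB'def]; nlinarith
  refine ⟨B', hB'0, ?_⟩
  intro N
  rw [← hzdef]
  induction N using Nat.strong_induction_on with
  | _ N IH =>
  by_cases hNM : N ≤ M₀
  · have := PP_mono_N ht hz0.le hNM
    rw [hB'def]
    nlinarith
  push_neg at hNM
  have hsplit : PP t z M₀ + ∑ M ∈ Finset.Ico (M₀+1) (N+1), t M * z^M = PP t z N := by
    simp only [PP]
    exact Finset.sum_Ico_consecutive _ (by omega) (by omega)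
  have hterm : ∀ M ∈ Finset.Ico (M₀+1) (N+1), t M * z^M
      ≤ Cy*z^M + (2*κ*B*B') * (1/(M:ℝ)^2) := by
    intro M hM
    have hmem := Finset.mem_Ico.mp hM
    have hM1 : 1 ≤ M := by omega
    have h1 := hstep M hM1
    have hzM : 0 ≤ z^M := pow_nonneg hz0.le M
    have hM0 : (0:ℝ) < (M:ℝ)^2 := by
      have : (0:ℝ) < (M:ℝ) := by exact_mod_cast (show 0 < M by omega)
      positivity
    have h3 := split_z ht M hM1 hz0.le
    have h4 : PP t (z/2) (M-1) ≤ B := by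
      have := PP_mono_z ht (by positivity) hzx (M-1)
      linarith [hPB (M-1)]
    have h5 : PP t z (M-1) ≤ B' := IH (M-1) (by omega)
    have hPn1 : 0 ≤ PP t (z/2) (M-1) := PP_nonneg ht (by positivity) _
    have hPn2 : 0 ≤ PP t z (M-1) := PP_nonneg ht hz0.le _
    have h6 : (∑ i ∈ Finset.Ico 1 M, t i * t (M-i) * (1/2:ℝ)^(min i (M-i))) * z^M
        ≤ 2*(B*B') := by nlinarith
    have h7 : t M * z^M ≤ Cy*z^M + κ/(M:ℝ)^2 *
        ((∑ i ∈ Finset.Ico 1 M, t i * t (M-i) * (1/2:ℝ)^(min i (M-i))) * z^M) := by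
      have := mul_le_mul_of_nonneg_right h1 hzM
      calc t M * z^M ≤ (Cy + κ/(M:ℝ)^2 * ∑ i ∈ Finset.Ico 1 M, t i * t (M-i) * (1/2:ℝ)^(min i (M-i))) * z^M := this
        _ = Cy*z^M + κ/(M:ℝ)^2 * ((∑ i ∈ Finset.Ico 1 M, t i * t (M-i) * (1/2:ℝ)^(min i (M-i))) * z^M) := by ring
    have h8 : κ/(M:ℝ)^2 * ((∑ i ∈ Finset.Ico 1 M, t i * t (M-i) * (1/2:ℝ)^(min i (M-i))) * z^M)
        ≤ κ/(M:ℝ)^2 * (2*(B*B')) := by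
      apply mul_le_mul_of_nonneg_left h6
      positivity
    have h9 : κ/(M:ℝ)^2 * (2*(B*B')) = (2*κ*B*B') * (1/(M:ℝ)^2) := by
      field_simp
    linarith
  have hsum1 : ∑ M ∈ Finset.Ico (M₀+1) (N+1), t M * z^M
      ≤ ∑ M ∈ Finset.Ico (M₀+1) (N+1), (Cy*z^M + (2*κ*B*B') * (1/(M:ℝ)^2)) :=
    Finset.sum_le_sum hterm
  have hsum2 : ∑ M ∈ Finset.Ico (M₀+1) (N+1), (Cy*z^M + (2*κ*B*B') * (1/(M:ℝ)^2))
      = Cy * (∑ M ∈ Finset.Ico (M₀+1) (N+1), z^M)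
        + (2*κ*B*B') * ∑ M ∈ Finset.Ico (M₀+1) (N+1), (1:ℝ)/(M:ℝ)^2 := by
    rw [Finset.sum_add_distrib, Finset.mul_sum, Finset.mul_sum]
  have hgeo : ∑ M ∈ Finset.Ico (M₀+1) (N+1), z^M ≤ 1 := geo_sum_le hz0.le hz2 _ _ (by omega)
  have hsq : ∑ M ∈ Finset.Ico (M₀+1) (N+1), (1:ℝ)/(M:ℝ)^2 ≤ 1/(M₀:ℝ) := by
    have := sum_sq_inv M₀ (by omega) (N+1)
    exact_mod_cast this
  have hb1 : Cy * (∑ M ∈ Finset.Ico (M₀+1) (N+1), z^M) ≤ Cy := by nlinarith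
  have hb2 : (2*κ*B*B') * ∑ M ∈ Finset.Ico (M₀+1) (N+1), (1:ℝ)/(M:ℝ)^2 ≤ B'/4 := by
    have hc0 : 0 ≤ 2*κ*B*B' := by positivity
    have h1 : (2*κ*B*B') * ∑ M ∈ Finset.Ico (M₀+1) (N+1), (1:ℝ)/(M:ℝ)^2
        ≤ (2*κ*B*B') * (1/(M₀:ℝ)) := mul_le_mul_of_nonneg_left hsq hc0
    have h2 : (2*κ*B*B') * (1/(M₀:ℝ)) ≤ B'/4 := by
      rw [mul_one_div, div_le_div_iff₀ hM₀0 (by norm_num)]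
      nlinarith
    linarith
  have hsq0 : 0 ≤ ∑ M ∈ Finset.Ico (M₀+1) (N+1), (1:ℝ)/(M:ℝ)^2 :=
    Finset.sum_nonneg fun i _ => by positivity
  calc PP t z N = PP t z M₀ + ∑ M ∈ Finset.Ico (M₀+1) (N+1), t M * z^M := hsplit.symm
    _ ≤ PP t z M₀ + (Cy + B'/4) := by
        have := hsum1
        rw [hsum2] at this
        linarith
    _ ≤ B' := by
        have h4 : PP t z M₀ + Cy = B'/4 := by rw [hB'def]; ring
        linarith

lemma reach (ht : ∀ n, 0 ≤ t n) (hCy : 0 < Cy) (hκ : 1 ≤ κ)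
    (hstep : ∀ M, 1 ≤ M → t M ≤ Cy + κ / (M:ℝ)^2 *
      ∑ i ∈ Finset.Ico 1 M, t i * t (M-i) * (1/2:ℝ)^(min i (M-i))) :
    ∃ B₂, 0 < B₂ ∧ ∀ N, PP t (1/2) N ≤ B₂ := by
  obtain ⟨x, B, hx0, hx4, hB0, hPB⟩ := stage0 ht hCy hκ hstep
  have key : ∀ k : ℕ, ∃ B', 0 < B' ∧ ∀ N, PP t (min (2^k*x) (1/2)) N ≤ B' := by
    intro k
    induction k with
    | zero =>
      refine ⟨B, hB0, fun N => ?_⟩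
      have hmin : min ((2:ℝ)^0*x) (1/2) = x := by
        rw [pow_zero, one_mul]
        exact min_eq_left (by linarith)
      rw [hmin]
      exact hPB N
    | succ k ihk =>
      obtain ⟨B', hB'0, hPB'⟩ := ihk
      by_cases hc : (2:ℝ)^k*x < 1/2
      · have hmin : min ((2:ℝ)^k*x) (1/2) = (2:ℝ)^k*x := min_eq_left hc.le
        rw [hmin] at hPB'
        have hx20 : (0:ℝ) < (2:ℝ)^k*x := by positivity
        obtain ⟨B'', h0, hPB''⟩ := double ht hCy hκ hstep hx20 hB'0 hPB'
        refine ⟨B'', h0, fun N => ?_⟩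
        have heq : min (2*((2:ℝ)^k*x)) (1/2) = min ((2:ℝ)^(k+1)*x) (1/2) := by
          rw [pow_succ]
          ring_nf
        rw [← heq]
        exact hPB'' N
      · push_neg at hc
        refine ⟨B', hB'0, fun N => ?_⟩
        have h1 : min ((2:ℝ)^k*x) (1/2) = 1/2 := min_eq_right hc
        have h2 : min ((2:ℝ)^(k+1)*x) (1/2) = 1/2 := by
          apply min_eq_right
          have hm : (2:ℝ)^k*x ≤ 2^(k+1)*x := by
            have : (0:ℝ) ≤ x := hx0.le
            have hp : (2:ℝ)^k ≤ 2^(k+1) := by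
              apply pow_le_pow_right₀ (by norm_num)
              omega
            nlinarith
          linarith
        rw [h2, ← h1]
        exact hPB' N
  obtain ⟨k, hk⟩ := pow_unbounded_of_one_lt (1/(2*x)) (by norm_num : (1:ℝ) < 2)
  obtain ⟨B₂, h0, hP2⟩ := key k
  have hm : min ((2:ℝ)^k*x) (1/2) = 1/2 := by
    apply min_eq_right
    rw [div_lt_iff₀ (by positivity)] at hk
    nlinarith
  rw [hm] at hP2
  exact ⟨B₂, h0, hP2⟩

lemma bdd_of_step (ht : ∀ n, 0 ≤ t n) (hCy : 0 < Cy) (hκ : 1 ≤ κ)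
    (hstep : ∀ M, 1 ≤ M → t M ≤ Cy + κ / (M:ℝ)^2 *
      ∑ i ∈ Finset.Ico 1 M, t i * t (M-i) * (1/2:ℝ)^(min i (M-i))) :
    ∃ D, 0 < D ∧ ∀ n, 1 ≤ n → t n ≤ D := by
  have hκ0 : (0:ℝ) < κ := by linarith
  obtain ⟨B₂, hB₂0, hP₂⟩ := reach ht hCy hκ hstep
  obtain ⟨M₁, hM₁def⟩ : ∃ M : ℕ, M = max 1 (⌈4*κ*B₂⌉₊) := ⟨_, rfl⟩
  have hM₁1 : 1 ≤ M₁ := by rw [hM₁def]; exact le_max_left _ _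
  have hM₁κ : 4*κ*B₂ ≤ (M₁:ℝ) := by
    have h1 : (4*κ*B₂) ≤ (⌈4*κ*B₂⌉₊ : ℝ) := Nat.le_ceil _
    have h2 : (⌈4*κ*B₂⌉₊ : ℝ) ≤ (M₁:ℝ) := by
      rw [hM₁def]
      exact_mod_cast le_max_right _ _
    linarith
  obtain ⟨D, hDdef⟩ : ∃ d : ℝ, d = 2*Cy + PP t 1 M₁ := ⟨_, rfl⟩
  have hPP1 : 0 ≤ PP t 1 M₁ := PP_nonneg ht (by norm_num) _
  have hD0 : 0 < D := by rw [hDdef]; linarith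
  refine ⟨D, hD0, ?_⟩
  intro n
  induction n using Nat.strong_induction_on with
  | _ n IH =>
  intro hn
  by_cases hsm : n ≤ M₁
  · have h1 : t n * (1:ℝ)^n ≤ PP t 1 M₁ := le_PP ht (by norm_num) hn hsm
    have h2 : t n * (1:ℝ)^n = t n := by rw [one_pow, mul_one]
    linarith [h2 ▸ h1]
  push_neg at hsm
  have h1 := hstep n (by omega)
  have hcore := split_core (t := t) ht n
  have hn0 : (0:ℝ) < (n:ℝ) := by exact_mod_cast (show 0 < n by omega)
  have hDbd : ∀ i ∈ Finset.Ico 1 n, t i * (1/2:ℝ)^i * t (n-i) ≤ (t i * (1/2:ℝ)^i) * D := by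
    intro i hi
    have hmem := Finset.mem_Ico.mp hi
    have htD : t (n-i) ≤ D := IH (n-i) (by omega) (by omega)
    exact mul_le_mul_of_nonneg_left htD (mul_nonneg (ht i) (by positivity))
  have h2 : ∑ i ∈ Finset.Ico 1 n, t i * (1/2:ℝ)^i * t (n-i) ≤ PP t (1/2) (n-1) * D := by
    calc ∑ i ∈ Finset.Ico 1 n, t i * (1/2:ℝ)^i * t (n-i)
        ≤ ∑ i ∈ Finset.Ico 1 n, (t i * (1/2:ℝ)^i) * D := Finset.sum_le_sum hDbd
      _ = (∑ i ∈ Finset.Ico 1 n, t i * (1/2:ℝ)^i) * D := by rw [← Finset.sum_mul]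
      _ = PP t (1/2) (n-1) * D := by
          congr 1
  have h3 : PP t (1/2) (n-1) ≤ B₂ := hP₂ _
  have hS : ∑ i ∈ Finset.Ico 1 n, t i * t (n-i) * (1/2:ℝ)^(min i (n-i)) ≤ 2*(B₂*D) := by
    have hP0 : 0 ≤ PP t (1/2) (n-1) := PP_nonneg ht (by norm_num) _
    nlinarith
  have hn2 : 4*κ*B₂ ≤ (n:ℝ)^2 := by
    have hMn : (M₁:ℝ) ≤ (n:ℝ) := by exact_mod_cast (show M₁ ≤ n by omega)
    have h1n : (1:ℝ) ≤ (n:ℝ) := by exact_mod_cast (show 1 ≤ n by omega)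
    nlinarith
  have hfin : κ/(n:ℝ)^2 * (2*(B₂*D)) ≤ D/2 := by
    rw [div_mul_eq_mul_div, div_le_div_iff₀ (by positivity) (by norm_num)]
    nlinarith
  have hmono : κ/(n:ℝ)^2 * (∑ i ∈ Finset.Ico 1 n, t i * t (n-i) * (1/2:ℝ)^(min i (n-i)))
      ≤ κ/(n:ℝ)^2 * (2*(B₂*D)) := by
    apply mul_le_mul_of_nonneg_left hS
    positivity
  calc t n ≤ Cy + κ/(n:ℝ)^2 * (∑ i ∈ Finset.Ico 1 n, t i * t (n-i) * (1/2:ℝ)^(min i (n-i))) := h1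
    _ ≤ Cy + D/2 := by linarith
    _ ≤ D := by
        have hCD : Cy ≤ D/2 := by
          rw [hDdef] at *
          linarith
        linarith

end Bounded

end RGQR

open RGQR in
/-- If `y_n = (Kn+1) v_n - Σ_{n1+n2=n} v_{n1} v_{n2}` with `y_n ~ c (Kn+1)!/(K^n n!)`
and `v_n/v_{n-1} → ∞`, then `v_n ~ y_n/(Kn-1)`. -/
theorem rapid_growth_quadratic_relation (K : ℕ) (hK : 3 ≤ K) (y v : ℕ → ℝ)
    (hy : ∀ n, 0 < y n) (hv : ∀ n, 0 < v n)
    (hrel : ∀ n : ℕ,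
      y n = ((K : ℝ) * n + 1) * v n - ∑ i ∈ Finset.range (n + 1), v i * v (n - i))
    (c : ℝ) (hc : 0 < c)
    (hasym : Asymptotics.IsEquivalent Filter.atTop y
      (fun n : ℕ => c * ((K * n + 1)! : ℝ) / ((K : ℝ) ^ n * (n ! : ℝ))))
    (hratio : Filter.Tendsto (fun n : ℕ => v (n + 1) / v n) Filter.atTop Filter.atTop) :
    Asymptotics.IsEquivalent Filter.atTop v (fun n : ℕ => y n / ((K : ℝ) * n - 1)) := by
  have hA : ∀ n, 0 < aa K n := aa_pos hK
  have hK3 : (3:ℝ) ≤ (K:ℝ) := by exact_mod_cast hK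
  -- v 0 < 1
  have hv0lt : v 0 < 1 := by
    have h0 := hrel 0
    simp at h0
    nlinarith [hy 0, hv 0]
  -- main identity
  have hCONV : ∀ n, 1 ≤ n → ((K:ℝ)*n + 1 - 2*(v 0)) * v n
      = y n + ∑ i ∈ Finset.Ico 1 n, v i * v (n-i) := by
    intro n hn
    have h := hrel n
    have e2 : n - n = 0 := Nat.sub_self n
    have e1 : ∑ i ∈ Finset.range n, v i * v (n-i)
        = v 0 * v n + ∑ i ∈ Finset.Ico 1 n, v i * v (n-i) := by
      rw [Finset.range_eq_Ico, Finset.sum_eq_sum_Ico_succ_bot (show 0 < n by omega)]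
      simp
    rw [Finset.sum_range_succ, e1, e2] at h
    rw [h]
    ring
  -- eventual two-sided bounds on y
  have hgfun : ∀ n : ℕ, c * ((K * n + 1)! : ℝ) / ((K : ℝ) ^ n * (n ! : ℝ)) = c * aa K n := by
    intro n
    rw [aa]
    ring
  have hne : ∀ᶠ n : ℕ in atTop,
      (fun n : ℕ => c * ((K * n + 1)! : ℝ) / ((K : ℝ) ^ n * (n ! : ℝ))) n ≠ 0 := by
    apply Filter.Eventually.of_forall
    intro n
    have := hA n
    simp only [hgfun n]
    positivity
  have hT := (Asymptotics.isEquivalent_iff_tendsto_one hne).mp hasym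
  have hev := hT (Ioo_mem_nhds (show (1/2:ℝ) < 1 by norm_num) (show (1:ℝ) < 2 by norm_num))
  rw [Filter.mem_map, Filter.mem_atTop_sets] at hev
  obtain ⟨N₀, hN₀⟩ := hev
  have hyy : ∀ n, N₀ ≤ n → c/2 * aa K n ≤ y n ∧ y n ≤ 2*c*aa K n := by
    intro n hn
    have h1 := hN₀ n hn
    simp only [Set.mem_preimage, Pi.div_apply, Set.mem_Ioo] at h1
    rw [hgfun n] at h1
    have hca : 0 < c * aa K n := mul_pos hc (hA n)
    constructor
    · have h2 := h1.1
      rw [lt_div_iff₀ hca] at h2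
      nlinarith
    · have h2 := h1.2
      rw [div_lt_iff₀ hca] at h2
      nlinarith
  -- global upper constant for y
  obtain ⟨Cy, hCydef⟩ : ∃ C : ℝ, C = 2*c + ∑ n ∈ Finset.range N₀, y n / aa K n := ⟨_, rfl⟩
  have hsumpos : 0 ≤ ∑ n ∈ Finset.range N₀, y n / aa K n :=
    Finset.sum_nonneg fun i _ => div_nonneg (hy i).le (hA i).le
  have hCy0 : 0 < Cy := by rw [hCydef]; linarith
  have hCyb : ∀ n, y n ≤ Cy * aa K n := by
    intro n
    rcases lt_or_ge n N₀ with h | h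
    · have h1 : y n / aa K n ≤ ∑ m ∈ Finset.range N₀, y m / aa K m :=
        Finset.single_le_sum (fun i _ => div_nonneg (hy i).le (hA i).le)
          (Finset.mem_range.mpr h)
      have h2 : y n / aa K n ≤ Cy := by rw [hCydef]; linarith
      rw [div_le_iff₀ (hA n)] at h2
      linarith
    · have h2 := (hyy n h).2
      have h3 : 2*c ≤ Cy := by rw [hCydef]; linarith
      nlinarith [hA n]
  -- the normalized sequence
  obtain ⟨tt, httdef⟩ : ∃ f : ℕ → ℝ, f = fun n => v n / aa K n := ⟨_, rfl⟩
  have httval : ∀ n, tt n = v n / aa K n := fun n => by rw [httdef]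
  have htt0 : ∀ n, 0 ≤ tt n := fun n => by
    rw [httval]; exact div_nonneg (hv n).le (hA n).le
  have httv : ∀ n, v n = tt n * aa K n := fun n => by
    rw [httval]
    exact (div_mul_cancel₀ (v n) (hA n).ne').symm
  obtain ⟨κ, hκdef⟩ : ∃ k : ℝ, k = 2^48 * aa K 1 := ⟨_, rfl⟩
  have haa1 : (1:ℝ) ≤ aa K 1 := by
    rw [aa, le_div_iff₀ (by positivity)]
    have hfa2 : K ≤ (K*1+1)! := le_trans (by omega) (Nat.self_le_factorial (K*1+1))
    calc (1:ℝ) * ((K:ℝ)^1 * ((1:ℕ)! : ℝ)) = (K:ℝ) := by norm_num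
    _ ≤ ((K*1+1)! : ℝ) := by exact_mod_cast hfa2
  have hκ1 : (1:ℝ) ≤ κ := by rw [hκdef]; nlinarith
  have hκ0 : (0:ℝ) < κ := by linarith
  -- per-term weight bound
  have hterm : ∀ M, 1 ≤ M → ∀ i ∈ Finset.Ico 1 M,
      v i * v (M-i) / aa K M
        ≤ κ/(M:ℝ)^2 * (tt i * tt (M-i) * (1/2:ℝ)^(min i (M-i))) := by
    intro M hM i hi
    have hmem := Finset.mem_Ico.mp hi
    have hM0 : (0:ℝ) < (M:ℝ) := by exact_mod_cast (show 0 < M by omega)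
    have hc2 := conv2 hK (i := i) (j := M - i) (by omega) (by omega)
    have h3 : i + (M-i) - 1 = M - 1 := by omega
    rw [h3] at hc2
    have hr : 4*(M:ℝ)^2 * aa K (M-1) ≤ aa K M := by
      have h := aa_ratio hK (M-1)
      have h4 : (M-1) + 1 = M := by omega
      rw [h4] at h
      have h5 : ((M-1 : ℕ):ℝ) + 1 = (M:ℝ) := by
        have h6 : ((M-1 : ℕ):ℝ) = (M:ℝ) - 1 := by
          rw [Nat.cast_sub (by omega)]
          norm_num
        rw [h6]; ring
      rw [h5] at h
      exact h
    have hw : aa K i * aa K (M-i) * ((M:ℝ)^2 * (2:ℝ)^(min i (M-i))) ≤ κ * aa K M := by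
      have h1 := mul_le_mul_of_nonneg_left hc2 (show (0:ℝ) ≤ (M:ℝ)^2 by positivity)
      have h2 := mul_le_mul_of_nonneg_left hr (show (0:ℝ) ≤ 2^48 * aa K 1 by positivity)
      have he : (M:ℝ)^2*((2:ℝ)^50*(aa K 1 * aa K (M-1)))
          = 2^48 * aa K 1 * (4*(M:ℝ)^2*aa K (M-1)) := by ring
      have hgoal : (M:ℝ)^2 * ((2:ℝ)^(min i (M-i)) * (aa K i * aa K (M-i)))
          ≤ 2^48 * aa K 1 * aa K M := by linarith
      rw [hκdef]
      nlinarith [hgoal]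
    have e1 : (1/2:ℝ)^(min i (M-i)) = 1 / (2:ℝ)^(min i (M-i)) := by
      rw [div_pow, one_pow]
    have hw' : aa K i * aa K (M-i) ≤ κ/(M:ℝ)^2 * (1/2:ℝ)^(min i (M-i)) * aa K M := by
      have hq : κ/(M:ℝ)^2 * (1/2:ℝ)^(min i (M-i)) * aa K M
          = κ * aa K M / ((M:ℝ)^2 * (2:ℝ)^(min i (M-i))) := by
        rw [e1]
        field_simp
      rw [hq, le_div_iff₀ (by positivity)]
      exact hw
    have htij : 0 ≤ tt i * tt (M-i) := mul_nonneg (htt0 i) (htt0 (M-i))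
    have hmul := mul_le_mul_of_nonneg_left hw' htij
    calc v i * v (M-i) / aa K M
        = (tt i * tt (M-i) * (aa K i * aa K (M-i))) / aa K M := by
          rw [httv i, httv (M-i)]; ring
      _ ≤ (tt i * tt (M-i) * (κ/(M:ℝ)^2 * (1/2:ℝ)^(min i (M-i)) * aa K M)) / aa K M :=
          (div_le_div_iff_of_pos_right (hA M)).mpr hmul
      _ = κ/(M:ℝ)^2 * (tt i * tt (M-i) * (1/2:ℝ)^(min i (M-i))) := by
          have hgrp : tt i * tt (M-i) * (κ/(M:ℝ)^2 * (1/2:ℝ)^(min i (M-i)) * aa K M)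
              = (κ/(M:ℝ)^2 * (tt i * tt (M-i) * (1/2:ℝ)^(min i (M-i)))) * aa K M := by
            ring
          rw [hgrp, mul_div_assoc, div_self (hA M).ne', mul_one]
  -- the step inequality for tt
  have hstep : ∀ M, 1 ≤ M → tt M ≤ Cy + κ/(M:ℝ)^2 *
      ∑ i ∈ Finset.Ico 1 M, tt i * tt (M-i) * (1/2:ℝ)^(min i (M-i)) := by
    intro M hM
    have hid := hCONV M hM
    have hM1 : (1:ℝ) ≤ (M:ℝ) := by exact_mod_cast hM
    have hfac : (1:ℝ) ≤ (K:ℝ)*M + 1 - 2*(v 0) := by nlinarith [hv 0, hv0lt]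
    have hvle : v M ≤ y M + ∑ i ∈ Finset.Ico 1 M, v i * v (M-i) := by
      have h0 := mul_le_mul_of_nonneg_right hfac (hv M).le
      rw [one_mul] at h0
      nlinarith [hid]
    have h1 : tt M ≤ (y M + ∑ i ∈ Finset.Ico 1 M, v i * v (M-i)) / aa K M := by
      rw [httval M]
      exact (div_le_div_iff_of_pos_right (hA M)).mpr hvle
    have h2 : (y M + ∑ i ∈ Finset.Ico 1 M, v i * v (M-i)) / aa K M
        = y M / aa K M + ∑ i ∈ Finset.Ico 1 M, (v i * v (M-i) / aa K M) := by
      rw [_root_.add_div, Finset.sum_div]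
    have h3 : y M / aa K M ≤ Cy := by
      rw [_root_.div_le_iff₀ (hA M)]
      exact hCyb M
    have h5 : ∑ i ∈ Finset.Ico 1 M, (v i * v (M-i) / aa K M)
        ≤ ∑ i ∈ Finset.Ico 1 M, κ/(M:ℝ)^2 * (tt i * tt (M-i) * (1/2:ℝ)^(min i (M-i))) :=
      Finset.sum_le_sum (hterm M hM)
    have h6 : ∑ i ∈ Finset.Ico 1 M, κ/(M:ℝ)^2 * (tt i * tt (M-i) * (1/2:ℝ)^(min i (M-i)))
        = κ/(M:ℝ)^2 * ∑ i ∈ Finset.Ico 1 M, (tt i * tt (M-i) * (1/2:ℝ)^(min i (M-i))) := by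
      rw [Finset.mul_sum]
    rw [h2] at h1
    rw [h6] at h5
    linarith
  -- boundedness
  obtain ⟨D, hD0, hDb⟩ := bdd_of_step htt0 hCy0 hκ1 hstep
  -- sum of weights bound
  have hmins : ∀ M : ℕ, ∑ i ∈ Finset.Ico 1 M, (1/2:ℝ)^(min i (M-i)) ≤ 2 := by
    intro M
    have h1 : ∑ i ∈ Finset.Ico 1 M, (1/2:ℝ)^(min i (M-i))
        ≤ ∑ i ∈ Finset.Ico 1 M, ((1/2:ℝ)^i + (1/2:ℝ)^(M-i)) := by
      apply Finset.sum_le_sum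
      intro i _
      rcases min_choice i (M-i) with h | h <;> rw [h]
      · have : (0:ℝ) ≤ (1/2:ℝ)^(M-i) := by positivity
        linarith
      · have : (0:ℝ) ≤ (1/2:ℝ)^i := by positivity
        linarith
    have h2 : ∑ i ∈ Finset.Ico 1 M, ((1/2:ℝ)^i + (1/2:ℝ)^(M-i))
        = (∑ i ∈ Finset.Ico 1 M, (1/2:ℝ)^i) + ∑ i ∈ Finset.Ico 1 M, (1/2:ℝ)^(M-i) := by
      rw [Finset.sum_add_distrib]
    have h3 : ∑ i ∈ Finset.Ico 1 M, (1/2:ℝ)^(M-i) = ∑ i ∈ Finset.Ico 1 M, (1/2:ℝ)^i :=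
      (sum_reflect M (fun j => (1/2:ℝ)^j)).symm
    have h4 : ∑ i ∈ Finset.Ico 1 M, (1/2:ℝ)^i ≤ 1 :=
      geo_sum_le (by norm_num) (by norm_num) 1 M le_rfl
    linarith
  -- convolution over y bound
  have hconvb : ∀ M, 1 ≤ M → (∑ i ∈ Finset.Ico 1 M, v i * v (M-i))
      ≤ 2*κ*D^2/(M:ℝ)^2 * aa K M := by
    intro M hM
    have hM0 : (0:ℝ) < (M:ℝ) := by exact_mod_cast (show 0 < M by omega)
    have h1 : ∑ i ∈ Finset.Ico 1 M, (v i * v (M-i) / aa K M)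
        ≤ ∑ i ∈ Finset.Ico 1 M, κ/(M:ℝ)^2 * (tt i * tt (M-i) * (1/2:ℝ)^(min i (M-i))) :=
      Finset.sum_le_sum (hterm M hM)
    have h2 : ∀ i ∈ Finset.Ico 1 M, κ/(M:ℝ)^2 * (tt i * tt (M-i) * (1/2:ℝ)^(min i (M-i)))
        ≤ κ/(M:ℝ)^2 * (D^2 * (1/2:ℝ)^(min i (M-i))) := by
      intro i hi
      have hmem := Finset.mem_Ico.mp hi
      have ha := hDb i (by omega)
      have hb := hDb (M-i) (by omega)
      have hp : (0:ℝ) ≤ (1/2:ℝ)^(min i (M-i)) := by positivity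
      apply mul_le_mul_of_nonneg_left _ (by positivity)
      have hab : tt i * tt (M-i) ≤ D * D :=
        mul_le_mul ha hb (htt0 (M-i)) hD0.le
      have hD2 : D^2 = D * D := by ring
      rw [hD2]
      exact mul_le_mul_of_nonneg_right hab hp
    have h3 : ∑ i ∈ Finset.Ico 1 M, κ/(M:ℝ)^2 * (D^2 * (1/2:ℝ)^(min i (M-i)))
        = κ/(M:ℝ)^2 * D^2 * ∑ i ∈ Finset.Ico 1 M, (1/2:ℝ)^(min i (M-i)) := by
      rw [Finset.mul_sum]
      apply Finset.sum_congr rfl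
      intro i _
      ring
    have h4 := hmins M
    have h5 : ∑ i ∈ Finset.Ico 1 M, (v i * v (M-i) / aa K M) ≤ 2*κ*D^2/(M:ℝ)^2 := by
      have h6 := Finset.sum_le_sum h2
      have h7 : κ/(M:ℝ)^2 * D^2 * ∑ i ∈ Finset.Ico 1 M, (1/2:ℝ)^(min i (M-i))
          ≤ κ/(M:ℝ)^2 * D^2 * 2 := by
        apply mul_le_mul_of_nonneg_left h4 (by positivity)
      have h8 : κ/(M:ℝ)^2 * D^2 * 2 = 2*κ*D^2/(M:ℝ)^2 := by ring
      rw [h3] at h6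
      linarith
    have h9 : ∑ i ∈ Finset.Ico 1 M, (v i * v (M-i) / aa K M)
        = (∑ i ∈ Finset.Ico 1 M, v i * v (M-i)) / aa K M := by
      rw [Finset.sum_div]
    rw [h9] at h5
    rw [div_le_iff₀ (hA M)] at h5
    exact h5
  -- CONV / y tends to zero
  have hconv_y : Filter.Tendsto
      (fun n : ℕ => (∑ i ∈ Finset.Ico 1 n, v i * v (n-i)) / y n) atTop (nhds 0) := by
    have hpow2 : Filter.Tendsto (fun n : ℕ => ((n:ℝ)^2)) atTop atTop :=
      (tendsto_pow_atTop (two_ne_zero)).comp tendsto_natCast_atTop_atTop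
    have hinv : Filter.Tendsto (fun n : ℕ => ((n:ℝ)^2)⁻¹) atTop (nhds 0) :=
      tendsto_inv_atTop_zero.comp hpow2
    have hbndf : Filter.Tendsto (fun n : ℕ => (4*κ*D^2/c) * ((n:ℝ)^2)⁻¹) atTop (nhds 0) := by
      have := hinv.const_mul (4*κ*D^2/c)
      simpa using this
    apply squeeze_zero' _ _ hbndf
    · apply Filter.Eventually.of_forall
      intro n
      apply div_nonneg _ (hy n).le
      exact Finset.sum_nonneg fun i _ => mul_nonneg (hv i).le (hv _).le
    · filter_upwards [Filter.eventually_ge_atTop (max N₀ 1)] with n hn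
      have hn1 : 1 ≤ n := le_trans (le_max_right _ _) hn
      have hnN : N₀ ≤ n := le_trans (le_max_left _ _) hn
      have hylo := (hyy n hnN).1
      have hn0 : (0:ℝ) < (n:ℝ) := by exact_mod_cast (show 0 < n by omega)
      have hy0 := hy n
      have h1 := hconvb n hn1
      have hnum0 : 0 ≤ 2*κ*D^2/(n:ℝ)^2 * aa K n := by
        apply mul_nonneg _ (hA n).le
        apply div_nonneg _ (by positivity)
        nlinarith [hκ0, sq_nonneg D]
      have hden0 : (0:ℝ) < c/2 * aa K n := by
        apply mul_pos (by linarith) (hA n)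
      have h2 : (∑ i ∈ Finset.Ico 1 n, v i * v (n-i)) / y n
          ≤ (2*κ*D^2/(n:ℝ)^2 * aa K n) / (c/2 * aa K n) :=
        div_le_div₀ hnum0 h1 hden0 hylo
      have h3 : (2*κ*D^2/(n:ℝ)^2 * aa K n) / (c/2 * aa K n) = (4*κ*D^2/c) * ((n:ℝ)^2)⁻¹ := by
        field_simp [(hA n).ne']
        ring
      rw [h3] at h2
      exact h2
  -- first factor tends to 1
  have hdenom : Filter.Tendsto (fun n : ℕ => (K:ℝ)*n + 1 - 2*(v 0)) atTop atTop := by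
    have h1 : Filter.Tendsto (fun n : ℕ => (K:ℝ)*n) atTop atTop := by
      apply Filter.Tendsto.const_mul_atTop (show (0:ℝ) < (K:ℝ) by linarith)
      exact tendsto_natCast_atTop_atTop
    have h2 := Filter.tendsto_atTop_add_const_right atTop (1 - 2*(v 0)) h1
    apply h2.congr
    intro n
    ring
  have hA1 : Filter.Tendsto (fun n : ℕ => ((K:ℝ)*n - 1)/((K:ℝ)*n + 1 - 2*(v 0)))
      atTop (nhds 1) := by
    have hzero : Filter.Tendsto (fun n : ℕ => (2 - 2*(v 0))/((K:ℝ)*n+1-2*(v 0)))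
        atTop (nhds 0) := Filter.Tendsto.div_atTop tendsto_const_nhds hdenom
    have hmain : Filter.Tendsto (fun n : ℕ => 1 - (2 - 2*(v 0))/((K:ℝ)*n+1-2*(v 0)))
        atTop (nhds 1) := by
      have := hzero.const_sub (1:ℝ)
      simpa using this
    apply Filter.Tendsto.congr' _ hmain
    filter_upwards [Filter.eventually_ge_atTop 1] with n hn
    have hn1 : (1:ℝ) ≤ (n:ℝ) := by exact_mod_cast hn
    have hd : (0:ℝ) < (K:ℝ)*n + 1 - 2*(v 0) := by nlinarith [hv 0, hv0lt]
    field_simp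
    ring
  have hB1 : Filter.Tendsto
      (fun n : ℕ => 1 + (∑ i ∈ Finset.Ico 1 n, v i * v (n-i)) / y n) atTop (nhds 1) := by
    have := hconv_y.const_add (1:ℝ)
    simpa using this
  have hF : Filter.Tendsto (fun n : ℕ => ((K:ℝ)*n - 1) * v n / y n) atTop (nhds 1) := by
    have hprod := hA1.mul hB1
    rw [one_mul] at hprod
    apply Filter.Tendsto.congr' _ hprod
    filter_upwards [Filter.eventually_ge_atTop 1] with n hn
    have hn1 : (1:ℝ) ≤ (n:ℝ) := by exact_mod_cast hn
    have hd : (0:ℝ) < (K:ℝ)*n + 1 - 2*(v 0) := by nlinarith [hv 0, hv0lt]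
    have hid := hCONV n hn
    have hy0 := hy n
    have hBval : 1 + (∑ i ∈ Finset.Ico 1 n, v i * v (n-i)) / y n
        = ((K:ℝ)*n + 1 - 2*(v 0)) * v n / y n := by
      rw [hid]
      field_simp
    rw [hBval]
    field_simp
  -- conclude
  have hwne : ∀ᶠ n : ℕ in atTop, (fun n : ℕ => y n / ((K:ℝ)*n - 1)) n ≠ 0 := by
    filter_upwards [Filter.eventually_ge_atTop 1] with n hn
    have hn1 : (1:ℝ) ≤ (n:ℝ) := by exact_mod_cast hn
    have hKn : (0:ℝ) < (K:ℝ)*n - 1 := by nlinarith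
    exact ne_of_gt (div_pos (hy n) hKn)
  rw [Asymptotics.isEquivalent_iff_tendsto_one hwne]
  apply Filter.Tendsto.congr' _ hF
  filter_upwards [Filter.eventually_ge_atTop 1] with n hn
  have hn1 : (1:ℝ) ≤ (n:ℝ) := by exact_mod_cast hn
  have hKn : (0:ℝ) < (K:ℝ)*n - 1 := by nlinarith
  have hy0 := hy n
  rw [Pi.div_apply]
  rw [div_div_eq_mul_div]
  ring_nf
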